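/- For any Young diagram Y (a partition), the hook length formula difference: d/H_Y equals the sum over corners (x,y) of Y of 1/H_{Y minus (x,y)}, where d is the number of boxes of Y, H_Y is the product of all hook lengths of Y, and a corner is a box with no box below it nor to its right. -/

import Mathlib

open Polynomial Finset

lemma coeff_prod_X_sub_C_sub_two {ι : Type*} [DecidableEq ι] (s : Finset ι) (f : ι → ℚ) :
    ∀ k : ℕ, s.card = k + 2 →
    2 * (∏ i ∈ s, (X - C (f i))).coeff k
      = (∑ i ∈ s, f i)^2 - ∑ i ∈ s, (f i)^2 := by
  induction s using Finset.cons_induction with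
  | empty => intro k h; simp at h
  | cons a t ha ih =>
    intro k h
    rw [Finset.card_cons] at h
    have ht : t.card = k + 1 := by omega
    rw [Finset.prod_cons, Finset.sum_cons, Finset.sum_cons]
    have hexp : ((X - C (f a)) * ∏ i ∈ t, (X - C (f i))).coeff k
        = (X * ∏ i ∈ t, (X - C (f i))).coeff k - f a * (∏ i ∈ t, (X - C (f i))).coeff k := by
      rw [sub_mul, Polynomial.coeff_sub, Polynomial.coeff_C_mul]
    have htc : (∏ i ∈ t, (X - C (f i))).coeff k = -∑ i ∈ t, f i := by
      have := Polynomial.prod_X_sub_C_coeff_card_pred t f (by omega)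
      rwa [ht, Nat.add_sub_cancel] at this
    rcases Nat.eq_zero_or_pos k with rfl | hk
    · rw [hexp]
      have h0 : (X * ∏ i ∈ t, (X - C (f i))).coeff 0 = 0 := by
        simp [Polynomial.coeff_zero_eq_eval_zero]
      rw [h0, htc]
      obtain ⟨b, rfl⟩ := Finset.card_eq_one.mp ht
      simp; ring
    · obtain ⟨m, rfl⟩ : ∃ m, k = m + 1 := ⟨k - 1, by omega⟩
      rw [hexp, Polynomial.coeff_X_mul, htc]
      have ihm := ih m (by omega)
      ring_nf
      ring_nf at ihm
      linarith [ihm]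

lemma prod_erase_monic (s : Finset ℕ) (b : ℕ → ℚ) (i : ℕ) :
    (∏ j ∈ s.erase i, (X - C (b j))).Monic :=
  monic_prod_of_monic _ _ fun _ _ => monic_X_sub_C _

lemma sumT (r : ℕ) (b : ℕ → ℚ)
    (hb : ∀ i < r, ∀ j, i < j → j < r → b j < b i) :
    ∑ i ∈ (Finset.range r).filter (fun i => ∀ j < r, b j ≠ b i - 1),
        b i * ∏ j ∈ (Finset.range r).erase i, ((b i - 1 - b j) / (b i - b j))
      = (∑ i ∈ Finset.range r, b i) - r * (r - 1) / 2 := by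
  have hinj : ∀ i < r, ∀ j < r, i ≠ j → b i ≠ b j := by
    intro i hi j hj hij
    rcases Nat.lt_or_ge i j with h | h
    · exact (hb i hi j h hj).ne'
    · exact (hb j hj i (by omega) hi).ne
  rcases Nat.eq_zero_or_pos r with rfl | hr0
  · simp
  rcases eq_or_lt_of_le (show 1 ≤ r from hr0) with hr1 | hr2
  · -- r = 1
    rw [← hr1]
    have hfil : (Finset.range 1).filter (fun i => ∀ j < (1:ℕ), b j ≠ b i - 1) = {0} := by
      apply Finset.eq_singleton_iff_unique_mem.mpr
      constructor
      · simp only [Finset.mem_filter, Finset.mem_range]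
        refine ⟨Nat.zero_lt_one, ?_⟩
        intro j hj
        interval_cases j
        intro h
        linarith
      · intro x hx
        simp only [Finset.mem_filter, Finset.mem_range] at hx
        omega
    rw [hfil]
    simp
  -- main case r ≥ 2
  obtain ⟨p, rfl⟩ : ∃ p, r = p + 2 := ⟨r - 2, by omega⟩
  set r := p + 2 with hr
  set s : Finset ℕ := Finset.range r with hs
  set V : Finset ℕ := s.filter (fun i => ∀ j < r, b j ≠ b i - 1) with hV
  have hVs : V ⊆ s := Finset.filter_subset _ _
  set A : ℚ[X] := ∏ j ∈ s, (X - C (b j)) with hA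
  set Bp : ℚ[X] := ∏ j ∈ s, (X - C (b j + 1)) with hBp
  set Q : ℚ[X] := ∑ i ∈ V, C (b i * ∏ j ∈ s.erase i, ((b i - 1 - b j) / (b i - b j)))
      * ∏ j ∈ s.erase i, (X - C (b j)) with hQ
  have hAmonic : A.Monic := monic_prod_of_monic _ _ fun _ _ => monic_X_sub_C _
  have hBmonic : Bp.Monic := monic_prod_of_monic _ _ fun _ _ => monic_X_sub_C _
  have hAdeg : A.natDegree = r := by
    rw [hA, natDegree_prod_of_monic _ _ fun _ _ => monic_X_sub_C _]
    simp only [natDegree_X_sub_C]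
    simp [hs, hr]
  have hBdeg : Bp.natDegree = r := by
    rw [hBp, natDegree_prod_of_monic _ _ fun _ _ => monic_X_sub_C _]
    simp only [natDegree_X_sub_C]
    simp [hs, hr]
  have herasecard : ∀ i ∈ s, (s.erase i).card = p + 1 := by
    intro i hi
    rw [Finset.card_erase_of_mem hi]
    simp [hs, hr]
  have heradeg : ∀ i ∈ s, (∏ j ∈ s.erase i, (X - C (b j))).natDegree = p + 1 := by
    intro i hi
    rw [natDegree_prod_of_monic _ _ fun _ _ => monic_X_sub_C _]
    simp only [natDegree_X_sub_C]
    rw [Finset.sum_const, herasecard i hi, smul_eq_mul, mul_one]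
  have hQcoeff : ∀ m, p + 1 < m → Q.coeff m = 0 := by
    intro m hm
    rw [hQ, Polynomial.finset_sum_coeff]
    apply Finset.sum_eq_zero
    intro i hi
    rw [Polynomial.coeff_C_mul, Polynomial.coeff_eq_zero_of_natDegree_lt, mul_zero]
    rw [heradeg i (hVs hi)]; exact hm
  -- coefficients of monic polys above/at degree
  have hhi : ∀ (P : ℚ[X]), P.Monic → P.natDegree = r → ∀ k, r < k → P.coeff k = 0 := by
    intro P hP hd k hk
    exact Polynomial.coeff_eq_zero_of_natDegree_lt (by omega)
  -- the key polynomial identity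
  have key : (X - C (r : ℚ)) * A = X * Bp + Q := by
    set D : ℚ[X] := (X - C (r : ℚ)) * A - (X * Bp + Q) with hD
    have hDcoeff : ∀ m, r ≤ m → D.coeff m = 0 := by
      intro m hm
      obtain ⟨k, rfl⟩ : ∃ k, m = k + 1 := ⟨m - 1, by omega⟩
      rw [hD, Polynomial.coeff_sub, Polynomial.coeff_add, sub_mul, Polynomial.coeff_sub,
        Polynomial.coeff_X_mul, Polynomial.coeff_X_mul, Polynomial.coeff_C_mul,
        hQcoeff (k + 1) (by omega)]
      rcases eq_or_lt_of_le hm with h1 | h1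
      · -- k + 1 = r
        have hk : k = p + 1 := by omega
        subst hk
        have hA1 : A.coeff (p + 1) = -∑ j ∈ s, b j := by
          have := Polynomial.prod_X_sub_C_coeff_card_pred s b (by simp [hs, hr])
          rw [show #s = p + 2 from by simp [hs, hr], show p + 2 - 1 = p + 1 from rfl] at this
          exact this
        have hB1 : Bp.coeff (p + 1) = -∑ j ∈ s, (b j + 1) := by
          have := Polynomial.prod_X_sub_C_coeff_card_pred s (fun j => b j + 1) (by simp [hs, hr])
          rw [show #s = p + 2 from by simp [hs, hr], show p + 2 - 1 = p + 1 from rfl] at this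
          exact this
        have hA2 : A.coeff (p + 2) = 1 := by
          have := hAmonic.coeff_natDegree
          rwa [hAdeg] at this
        rw [← h1, hA1, hB1, hA2]
        rw [Finset.sum_add_distrib, Finset.sum_const, show s.card = p + 2 by simp [hs, hr]]
        push_cast [hr]
        ring
      · -- k + 1 > r
        have hA1 : A.coeff k = Bp.coeff k := by
          rcases eq_or_lt_of_le (show r ≤ k by omega) with h2 | h2
          · rw [← h2]
            have := hAmonic.coeff_natDegree
            rw [hAdeg] at this
            have hb2 := hBmonic.coeff_natDegree
            rw [hBdeg] at hb2
            rw [this, hb2]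
          · rw [hhi A hAmonic hAdeg k h2, hhi Bp hBmonic hBdeg k h2]
        rw [hA1, hhi A hAmonic hAdeg (k + 1) (by omega)]
        ring
    have hDeval : ∀ i ∈ s, D.eval (b i) = 0 := by
      intro i hi
      have hir : i < r := by rwa [hs, Finset.mem_range] at hi
      have hAeval : A.eval (b i) = 0 := by
        rw [hA, Polynomial.eval_prod]
        apply Finset.prod_eq_zero hi
        simp
      rw [hD, Polynomial.eval_sub, Polynomial.eval_mul, Polynomial.eval_add, Polynomial.eval_mul,
        Polynomial.eval_X, hAeval, mul_zero, zero_sub, neg_eq_zero]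
      have hBeval : Bp.eval (b i) = ∏ j ∈ s, (b i - (b j + 1)) := by
        rw [hBp, Polynomial.eval_prod]
        apply Finset.prod_congr rfl
        intro j _
        simp
      have hQeval : Q.eval (b i) = ∑ k ∈ V, (b k * ∏ j ∈ s.erase k, ((b k - 1 - b j) / (b k - b j)))
          * ∏ j ∈ s.erase k, (b i - b j) := by
        rw [hQ, Polynomial.eval_finset_sum]
        apply Finset.sum_congr rfl
        intro k _
        rw [Polynomial.eval_mul, Polynomial.eval_C, Polynomial.eval_prod]
        congr 1
        apply Finset.prod_congr rfl
        intro j _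
        simp
      rw [hBeval, hQeval]
      by_cases hiV : i ∈ V
      · rw [Finset.sum_eq_single_of_mem i hiV]
        · have hne : ∏ j ∈ s.erase i, (b i - b j) ≠ 0 := by
            rw [Finset.prod_ne_zero_iff]
            intro j hj
            have hjs := Finset.mem_of_mem_erase hj
            have hji := Finset.ne_of_mem_erase hj
            have : b i ≠ b j := hinj i hir j (by rwa [hs, Finset.mem_range] at hjs) (Ne.symm hji)
            exact sub_ne_zero_of_ne this
          rw [Finset.prod_div_distrib, mul_assoc, div_mul_cancel₀ _ hne]
          have hsplit : ∏ j ∈ s, (b i - (b j + 1)) = (b i - (b i + 1)) * ∏ j ∈ s.erase i, (b i - (b j + 1)) :=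
            (Finset.mul_prod_erase s _ hi).symm
          rw [hsplit]
          have : ∏ j ∈ s.erase i, (b i - (b j + 1)) = ∏ j ∈ s.erase i, (b i - 1 - b j) := by
            apply Finset.prod_congr rfl
            intro j _; ring
          rw [this]
          ring
        · intro k hk hki
          have : ∏ j ∈ s.erase k, (b i - b j) = 0 := by
            apply Finset.prod_eq_zero (Finset.mem_erase_of_ne_of_mem (Ne.symm hki) hi)
            simp
          rw [this, mul_zero]
      · have hQ0 : ∑ k ∈ V, (b k * ∏ j ∈ s.erase k, ((b k - 1 - b j) / (b k - b j)))
            * ∏ j ∈ s.erase k, (b i - b j) = 0 := by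
          apply Finset.sum_eq_zero
          intro k hk
          have hki : k ≠ i := fun h => hiV (h ▸ hk)
          have : ∏ j ∈ s.erase k, (b i - b j) = 0 := by
            apply Finset.prod_eq_zero (Finset.mem_erase_of_ne_of_mem (Ne.symm hki) hi)
            simp
          rw [this, mul_zero]
        have : ∃ j0, j0 < r ∧ b j0 = b i - 1 := by
          rw [hV, Finset.mem_filter] at hiV
          push_neg at hiV
          exact hiV hi
        obtain ⟨j0, hj0r, hj0⟩ := this
        have hB0 : ∏ j ∈ s, (b i - (b j + 1)) = 0 := by
          apply Finset.prod_eq_zero (show j0 ∈ s by rw [hs, Finset.mem_range]; exact hj0r)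
          rw [hj0]; ring
        rw [hB0, hQ0, mul_zero, add_zero]
    -- conclude D = 0
    have hD0 : D = 0 := by
      by_contra hne
      have hdeg : D.natDegree < r := by
        rw [Polynomial.natDegree_lt_iff_degree_lt hne]
        rw [Polynomial.degree_lt_iff_coeff_zero]
        intro m hm
        exact hDcoeff m (by exact_mod_cast hm)
      have := Polynomial.eq_zero_of_natDegree_lt_card_of_eval_eq_zero' D (s.image b)
        (fun x hx => by
          obtain ⟨i, hi, rfl⟩ := Finset.mem_image.mp hx
          exact hDeval i hi)
        (by
          rw [Finset.card_image_of_injOn]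
          · rw [show s.card = r by simp [hs, hr]]; exact hdeg
          · intro i hi j hj hij
            by_contra hne2
            exact hinj i (by simpa [hs] using hi) j
              (by simpa [hs] using hj) hne2 hij)
      exact hne this
    exact sub_eq_zero.mp hD0
  -- extract coefficient p+1
  have hc := congrArg (fun (P : ℚ[X]) => P.coeff (p + 1)) key
  have hL : ((X - C ((r : ℕ) : ℚ)) * A).coeff (p + 1) = A.coeff p - ((r : ℕ) : ℚ) * A.coeff (p + 1) := by
    rw [sub_mul, Polynomial.coeff_sub, Polynomial.coeff_X_mul, Polynomial.coeff_C_mul]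
  have hR1 : (X * Bp).coeff (p + 1) = Bp.coeff p := Polynomial.coeff_X_mul Bp p
  have hQc : Q.coeff (p + 1)
      = ∑ i ∈ V, b i * ∏ j ∈ s.erase i, ((b i - 1 - b j) / (b i - b j)) := by
    rw [hQ, Polynomial.finset_sum_coeff]
    apply Finset.sum_congr rfl
    intro i hi
    rw [Polynomial.coeff_C_mul]
    have hone : (∏ j ∈ s.erase i, (X - C (b j))).coeff (p + 1) = 1 := by
      have hm := (prod_erase_monic s b i).coeff_natDegree
      rwa [heradeg i (hVs hi)] at hm
    rw [hone, mul_one]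
  have hA1 : A.coeff (p + 1) = -∑ j ∈ s, b j := by
    have := Polynomial.prod_X_sub_C_coeff_card_pred s b (by simp [hs, hr])
    rw [show #s = p + 2 from by simp [hs, hr], show p + 2 - 1 = p + 1 from rfl] at this
    exact this
  have hA2 : 2 * A.coeff p = (∑ j ∈ s, b j) ^ 2 - ∑ j ∈ s, (b j) ^ 2 :=
    coeff_prod_X_sub_C_sub_two s b p (by simp [hs, hr])
  have hB2 : 2 * Bp.coeff p = (∑ j ∈ s, (b j + 1)) ^ 2 - ∑ j ∈ s, (b j + 1) ^ 2 :=
    coeff_prod_X_sub_C_sub_two s (fun j => b j + 1) p (by simp [hs, hr])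
  have hcard : (#s : ℚ) = (p : ℚ) + 2 := by rw [hs, Finset.card_range, hr]; push_cast; ring
  have hsum1 : ∑ j ∈ s, (b j + 1) = (∑ j ∈ s, b j) + ((p : ℚ) + 2) := by
    rw [Finset.sum_add_distrib, Finset.sum_const, nsmul_eq_mul, mul_one, hcard]
  have hsum2 : ∑ j ∈ s, (b j + 1) ^ 2
      = (∑ j ∈ s, (b j) ^ 2) + 2 * (∑ j ∈ s, b j) + ((p : ℚ) + 2) := by
    have step : ∑ j ∈ s, (b j + 1) ^ 2 = ∑ j ∈ s, ((b j) ^ 2 + 2 * b j + 1) :=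
      Finset.sum_congr rfl fun j _ => by ring
    rw [step, Finset.sum_add_distrib, Finset.sum_add_distrib, Finset.sum_const, nsmul_eq_mul,
      mul_one, hcard, ← Finset.mul_sum]
  have hrq : ((r : ℕ) : ℚ) = (p : ℚ) + 2 := by rw [hr]; push_cast; ring
  rw [hL, Polynomial.coeff_add, hR1, hQc, hA1, hrq] at hc
  rw [hsum1, hsum2] at hB2
  rw [hrq]
  nlinarith [hc, hA2, hB2]
def hookLen (c : Finset (ℕ × ℕ)) (u : ℕ × ℕ) : ℕ :=
  (c.filter fun v => v.1 = u.1 ∧ u.2 ≤ v.2).card +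
  (c.filter fun v => v.2 = u.2 ∧ u.1 < v.1).card

def hookProd (c : Finset (ℕ × ℕ)) : ℕ := ∏ u ∈ c, hookLen c u

def cellsOf (l : ℕ → ℕ) (r : ℕ) : Finset (ℕ × ℕ) :=
  (Finset.range r).biUnion fun i => (Finset.range (l i)).image fun x => (i, x)

def bet (l : ℕ → ℕ) (r : ℕ) (i : ℕ) : ℕ := l i + (r - 1 - i)

lemma mem_cellsOf {l : ℕ → ℕ} {r : ℕ} {u : ℕ × ℕ} :
    u ∈ cellsOf l r ↔ u.1 < r ∧ u.2 < l u.1 := by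
  obtain ⟨a, c⟩ := u
  simp only [cellsOf, Finset.mem_biUnion, Finset.mem_image, Finset.mem_range, Prod.mk.injEq]
  constructor
  · rintro ⟨i, hi, x, hx, rfl, rfl⟩
    exact ⟨hi, hx⟩
  · rintro ⟨ha, hc⟩
    exact ⟨a, ha, c, hc, rfl, rfl⟩

section
variable (l : ℕ → ℕ) (r : ℕ)
    (hmono : ∀ i j, i ≤ j → l j ≤ l i) (hsupp : ∀ i, r ≤ i → l i = 0)

include hmono hsupp

lemma bet_anti : ∀ i j, i < j → j < r → bet l r j < bet l r i := by
  intro i j hij hjr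
  have := hmono i j (le_of_lt hij)
  unfold bet
  omega

lemma hookLen_cellsOf {i x : ℕ} (hir : i < r) (hx : x < l i) :
    hookLen (cellsOf l r) (i, x)
      = (l i - x) + (((Finset.Ioo i r).filter fun j => x < l j).card) := by
  unfold hookLen
  congr 1
  · have him : (cellsOf l r).filter (fun v => v.1 = (i, x).1 ∧ (i, x).2 ≤ v.2)
        = (Finset.Ico x (l i)).image fun y => (i, y) := by
      ext ⟨a, c⟩
      simp only [Finset.mem_filter, mem_cellsOf, Finset.mem_image, Finset.mem_Ico, Prod.mk.injEq]
      constructor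
      · rintro ⟨⟨har, hc⟩, rfl, hxc⟩
        exact ⟨c, ⟨hxc, hc⟩, rfl, rfl⟩
      · rintro ⟨y, ⟨hy1, hy2⟩, rfl, rfl⟩
        exact ⟨⟨hir, hy2⟩, rfl, hy1⟩
    rw [him, Finset.card_image_of_injective _ (fun a b h => by simpa using h), Nat.card_Ico]
  · have him : (cellsOf l r).filter (fun v => v.2 = (i, x).2 ∧ (i, x).1 < v.1)
        = (((Finset.Ioo i r).filter fun j => x < l j)).image fun j => (j, x) := by
      ext ⟨a, c⟩
      simp only [Finset.mem_filter, mem_cellsOf, Finset.mem_image, Finset.mem_Ioo, Prod.mk.injEq]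
      constructor
      · rintro ⟨⟨har, hc⟩, rfl, hia⟩
        exact ⟨a, ⟨⟨hia, har⟩, hc⟩, rfl, rfl⟩
      · rintro ⟨j, ⟨⟨hj1, hj2⟩, hj3⟩, rfl, rfl⟩
        exact ⟨⟨hj2, hj3⟩, rfl, hj1⟩
    rw [him, Finset.card_image_of_injective _ (fun a b h => by simpa using h)]

lemma row_hook_prod {i : ℕ} (hir : i < r) :
    (∏ x ∈ Finset.range (l i), hookLen (cellsOf l r) (i, x))
      * ∏ j ∈ Finset.Ioo i r, (bet l r i - bet l r j)
    = (bet l r i).factorial := by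
  classical
  set φ : ℕ → ℕ := fun x => x + ((Finset.Ioo i r).filter fun j => l j ≤ x).card with hφ
  have hookphi : ∀ x < l i, hookLen (cellsOf l r) (i, x) + φ x = bet l r i := by
    intro x hx
    rw [hookLen_cellsOf l r hmono hsupp hir hx]
    simp only [hφ]
    have hsplit : (((Finset.Ioo i r).filter fun j => x < l j).card)
        + (((Finset.Ioo i r).filter fun j => l j ≤ x).card) = (Finset.Ioo i r).card := by
      have h := Finset.card_filter_add_card_filter_not (s := Finset.Ioo i r)
        (p := fun j => x < l j)
      simp only [not_lt] at h
      exact h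
    rw [Nat.card_Ioo] at hsplit
    unfold bet
    omega
  -- φ is strictly monotone
  have hφmono : ∀ x y, x < y → φ x < φ y := by
    intro x y hxy
    have : ((Finset.Ioo i r).filter fun j => l j ≤ x).card
        ≤ ((Finset.Ioo i r).filter fun j => l j ≤ y).card := by
      apply Finset.card_le_card
      intro j hj
      rw [Finset.mem_filter] at hj ⊢
      exact ⟨hj.1, le_trans hj.2 (le_of_lt hxy)⟩
    simp only [hφ]
    omega
  -- φ never hits bet values
  have hφne : ∀ x < l i, ∀ j, i < j → j < r → φ x ≠ bet l r j := by
    intro x hx j hij hjr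
    rcases Nat.lt_or_ge x (l j) with hcase | hcase
    · -- φ x < bet j
      have hsub : ((Finset.Ioo i r).filter fun j' => l j' ≤ x) ⊆ Finset.Ioo j r := by
        intro j' hj'
        rw [Finset.mem_filter, Finset.mem_Ioo] at hj'
        rw [Finset.mem_Ioo]
        refine ⟨?_, hj'.1.2⟩
        by_contra hle
        push_neg at hle
        have := hmono j' j hle
        omega
      have hcard := Finset.card_le_card hsub
      rw [Nat.card_Ioo] at hcard
      simp only [hφ]
      unfold bet
      omega
    · -- φ x > bet j
      have hsub : Finset.Ico j r ⊆ (Finset.Ioo i r).filter fun j' => l j' ≤ x := by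
        intro j' hj'
        rw [Finset.mem_Ico] at hj'
        rw [Finset.mem_filter, Finset.mem_Ioo]
        have := hmono j j' hj'.1
        exact ⟨⟨lt_of_lt_of_le hij hj'.1, hj'.2⟩, by omega⟩
      have hcard := Finset.card_le_card hsub
      rw [Nat.card_Ico] at hcard
      simp only [hφ]
      unfold bet
      omega
  set S : Finset ℕ := (Finset.range (l i)).image φ with hS
  set T : Finset ℕ := (Finset.Ioo i r).image (bet l r) with hT
  have hdisj : Disjoint S T := by
    rw [Finset.disjoint_left]
    intro v hvS hvT
    rw [hS, Finset.mem_image] at hvS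
    rw [hT, Finset.mem_image] at hvT
    obtain ⟨x, hx, rfl⟩ := hvS
    obtain ⟨j, hj, heq⟩ := hvT
    rw [Finset.mem_range] at hx
    rw [Finset.mem_Ioo] at hj
    exact hφne x hx j hj.1 hj.2 heq.symm
  have hφinj : Function.Injective φ := (strictMono_nat_of_lt_succ
    (fun n => hφmono n (n+1) (Nat.lt_succ_self n))).injective
  have hbetinj : Set.InjOn (bet l r) (Finset.Ioo i r) := by
    intro a ha b hb hab
    simp only [Finset.coe_Ioo, Set.mem_Ioo] at ha hb
    by_contra hne
    rcases Nat.lt_or_ge a b with h | h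
    · have := bet_anti l r hmono hsupp a b h hb.2; omega
    · have := bet_anti l r hmono hsupp b a (by omega) ha.2; omega
  have hScard : S.card = l i := by
    rw [hS, Finset.card_image_of_injective _ hφinj, Finset.card_range]
  have hTcard : T.card = r - 1 - i := by
    rw [hT, Finset.card_image_of_injOn hbetinj, Nat.card_Ioo]
    omega
  have hunion : S ∪ T = Finset.range (bet l r i) := by
    apply Finset.eq_of_subset_of_card_le
    · apply Finset.union_subset
      · intro v hv
        rw [hS, Finset.mem_image] at hv
        obtain ⟨x, hx, rfl⟩ := hv
        rw [Finset.mem_range] at hx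
        have hcard : ((Finset.Ioo i r).filter fun j => l j ≤ x).card ≤ (Finset.Ioo i r).card :=
          Finset.card_le_card (Finset.filter_subset _ _)
        rw [Nat.card_Ioo] at hcard
        rw [Finset.mem_range]
        simp only [hφ]
        unfold bet
        omega
      · intro v hv
        rw [hT, Finset.mem_image] at hv
        obtain ⟨j, hj, rfl⟩ := hv
        rw [Finset.mem_Ioo] at hj
        rw [Finset.mem_range]
        exact bet_anti l r hmono hsupp i j hj.1 hj.2
    · rw [Finset.card_range, Finset.card_union_of_disjoint hdisj, hScard, hTcard]
      unfold bet
      omega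
  have hprod1 : (∏ x ∈ Finset.range (l i), hookLen (cellsOf l r) (i, x))
      = ∏ v ∈ S, (bet l r i - v) := by
    rw [hS, Finset.prod_image (fun x _ y _ h => hφinj h)]
    apply Finset.prod_congr rfl
    intro x hx
    rw [Finset.mem_range] at hx
    have := hookphi x hx
    omega
  have hprod2 : (∏ j ∈ Finset.Ioo i r, (bet l r i - bet l r j))
      = ∏ v ∈ T, (bet l r i - v) := by
    rw [hT, Finset.prod_image (fun x hx y hy h => hbetinj (by simpa using hx) (by simpa using hy) h)]
  rw [hprod1, hprod2, ← Finset.prod_union hdisj, hunion]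
  have : ∀ v ∈ Finset.range (bet l r i), bet l r i - v = bet l r i - v := fun _ _ => rfl
  calc ∏ v ∈ Finset.range (bet l r i), (bet l r i - v)
      = ∏ v ∈ Finset.range (bet l r i), (v + 1) := by
        rw [← Finset.prod_range_reflect (fun v => bet l r i - v) (bet l r i)]
        apply Finset.prod_congr rfl
        intro x hx
        rw [Finset.mem_range] at hx
        omega
    _ = (bet l r i).factorial := Finset.prod_range_add_one_eq_factorial _

-- total product over all cells, in ℕ
lemma hookProd_cellsOf :
    hookProd (cellsOf l r) * ∏ i ∈ Finset.range r, ∏ j ∈ Finset.Ioo i r, (bet l r i - bet l r j)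
      = ∏ i ∈ Finset.range r, (bet l r i).factorial := by
  classical
  have hdisj : ∀ a ∈ Finset.range r, ∀ b ∈ Finset.range r, a ≠ b →
      Disjoint ((Finset.range (l a)).image fun x => (a, x))
        ((Finset.range (l b)).image fun x => (b, x)) := by
    intro a _ b _ hab
    rw [Finset.disjoint_left]
    rintro ⟨u, v⟩ hu hv
    simp only [Finset.mem_image, Finset.mem_range, Prod.mk.injEq] at hu hv
    obtain ⟨x, _, rfl, _⟩ := hu
    obtain ⟨y, _, h2, _⟩ := hv
    exact hab (h2 ▸ rfl)
  have hsplit : hookProd (cellsOf l r)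
      = ∏ i ∈ Finset.range r, ∏ x ∈ Finset.range (l i), hookLen (cellsOf l r) (i, x) := by
    unfold hookProd
    rw [show cellsOf l r = (Finset.range r).biUnion
      (fun i => (Finset.range (l i)).image fun x => (i, x)) from rfl]
    rw [Finset.prod_biUnion hdisj]
    apply Finset.prod_congr rfl
    intro i _
    rw [Finset.prod_image (fun x _ y _ h => by simpa using h)]
  rw [hsplit, ← Finset.prod_mul_distrib]
  apply Finset.prod_congr rfl
  intro i hi
  exact row_hook_prod l r hmono hsupp (Finset.mem_range.mp hi)

end

section Glue

open Finset

lemma prod_pairs_split (r i : ℕ) (hir : i < r) (c : ℕ → ℚ) :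
    ∏ k ∈ Finset.range r, ∏ j ∈ Finset.Ioo k r, (c k - c j)
    = ((∏ k ∈ Finset.range i, (c k - c i)) * ∏ j ∈ Finset.Ioo i r, (c i - c j))
      * ∏ k ∈ (Finset.range r).erase i, ∏ j ∈ (Finset.Ioo k r).erase i, (c k - c j) := by
  rw [← Finset.prod_erase_mul (Finset.range r) _ (Finset.mem_range.mpr hir)]
  have hIooi : (Finset.Ioo i r).erase i = Finset.Ioo i r := by
    apply Finset.erase_eq_of_notMem
    rw [Finset.mem_Ioo]
    omega
  have hstep : ∀ k ∈ (Finset.range r).erase i, ∏ j ∈ Finset.Ioo k r, (c k - c j)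
      = (if k < i then (c k - c i) else 1) * ∏ j ∈ (Finset.Ioo k r).erase i, (c k - c j) := by
    intro k hk
    rw [Finset.mem_erase, Finset.mem_range] at hk
    by_cases hki : k < i
    · rw [if_pos hki,
        ← Finset.mul_prod_erase (Finset.Ioo k r) _ (by rw [Finset.mem_Ioo]; exact ⟨hki, hir⟩)]
    · rw [if_neg hki, one_mul, Finset.erase_eq_of_notMem]
      rw [Finset.mem_Ioo]
      omega
  rw [Finset.prod_congr rfl hstep, Finset.prod_mul_distrib]
  have hfil : ∏ k ∈ (Finset.range r).erase i, (if k < i then (c k - c i) else 1)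
      = ∏ k ∈ Finset.range i, (c k - c i) := by
    rw [← Finset.prod_filter]
    congr 1
    ext k
    simp only [Finset.mem_filter, Finset.mem_erase, Finset.mem_range]
    omega
  rw [hfil]
  ring

lemma erase_range_eq (r i : ℕ) (hir : i < r) :
    (Finset.range r).erase i = Finset.range i ∪ Finset.Ioo i r := by
  ext k
  simp only [Finset.mem_erase, Finset.mem_range, Finset.mem_union, Finset.mem_Ioo]
  omega

lemma erase_corner_cells (l : ℕ → ℕ) (r i : ℕ) (hir : i < r) (hpos : 0 < l i) :
    (cellsOf l r).erase (i, l i - 1)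
      = cellsOf (fun j => if j = i then l i - 1 else l j) r := by
  ext ⟨a, c⟩
  rw [Finset.mem_erase, mem_cellsOf, mem_cellsOf]
  dsimp only
  simp only [Prod.mk.injEq, ne_eq, not_and]
  constructor
  · rintro ⟨hne, har, hc⟩
    refine ⟨har, ?_⟩
    by_cases hai : a = i
    · subst hai
      rw [if_pos rfl]
      have hcc : ¬ c = l a - 1 := hne rfl
      omega
    · rw [if_neg hai]; exact hc
  · rintro ⟨har, hc⟩
    by_cases hai : a = i
    · subst hai
      rw [if_pos rfl] at hc
      exact ⟨fun _ => by omega, har, by omega⟩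
    · rw [if_neg hai] at hc
      exact ⟨fun h => absurd h hai, har, hc⟩

lemma hookProdQ (l : ℕ → ℕ) (r : ℕ)
    (hmono : ∀ i j, i ≤ j → l j ≤ l i) (hsupp : ∀ i, r ≤ i → l i = 0) :
    (hookProd (cellsOf l r) : ℚ)
        * ∏ k ∈ Finset.range r, ∏ j ∈ Finset.Ioo k r,
            (((bet l r k : ℕ) : ℚ) - ((bet l r j : ℕ) : ℚ))
      = ∏ k ∈ Finset.range r, ((bet l r k).factorial : ℚ) := by
  have h := congrArg (Nat.cast : ℕ → ℚ) (hookProd_cellsOf l r hmono hsupp)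
  push_cast at h
  have hc : ∀ k ∈ Finset.range r, ∏ j ∈ Finset.Ioo k r, ((bet l r k - bet l r j : ℕ) : ℚ)
      = ∏ j ∈ Finset.Ioo k r, (((bet l r k : ℕ) : ℚ) - ((bet l r j : ℕ) : ℚ)) := by
    intro k hk
    apply Finset.prod_congr rfl
    intro j hj
    rw [Finset.mem_Ioo] at hj
    rw [Finset.mem_range] at hk
    exact Nat.cast_sub (le_of_lt (bet_anti l r hmono hsupp k j hj.1 hj.2))
  rw [Finset.prod_congr rfl hc] at h
  exact h

lemma ratio_lemma (l : ℕ → ℕ) (r : ℕ)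
    (hmono : ∀ i j, i ≤ j → l j ≤ l i) (hsupp : ∀ i, r ≤ i → l i = 0)
    (i : ℕ) (hir : i < r) (hpos : 0 < l i) (hcorner : l (i + 1) < l i) :
    (1 : ℚ) / (hookProd (cellsOf (fun j => if j = i then l i - 1 else l j) r) : ℚ)
      = (((bet l r i : ℕ) : ℚ) * ∏ j ∈ (Finset.range r).erase i,
          ((((bet l r i : ℕ) : ℚ) - 1 - ((bet l r j : ℕ) : ℚ))
            / (((bet l r i : ℕ) : ℚ) - ((bet l r j : ℕ) : ℚ))))
        / (hookProd (cellsOf l r) : ℚ) := by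
  classical
  set b : ℕ → ℚ := fun k => ((bet l r k : ℕ) : ℚ) with hb
  set l' : ℕ → ℕ := fun j => if j = i then l i - 1 else l j with hl'
  have hmono' : ∀ a c, a ≤ c → l' c ≤ l' a := by
    intro a c hac
    simp only [hl']
    split_ifs with h1 h2 h2
    · omega
    · subst h1
      have := hmono a c hac
      omega
    · subst h2
      have := hmono (a + 1) c (by omega)
      have := hmono a (a + 1) (by omega)
      omega
    · exact hmono a c hac
  have hmono'' : ∀ a c, a ≤ c → l' c ≤ l' a := hmono'
  have hsupp' : ∀ j, r ≤ j → l' j = 0 := by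
    intro j hj
    simp only [hl']
    rw [if_neg (by omega)]
    exact hsupp j hj
  have hbeti : 1 ≤ bet l r i := by unfold bet; omega
  have hbet'nat : ∀ j, bet l' r j = if j = i then bet l r i - 1 else bet l r j := by
    intro j
    unfold bet
    simp only [hl']
    split_ifs
    · omega
    · rfl
  -- ℚ level data
  set F : ℚ := ∏ k ∈ Finset.range r, ((bet l r k).factorial : ℚ) with hF
  set F' : ℚ := ∏ k ∈ Finset.range r, ((bet l' r k).factorial : ℚ) with hF'
  set D : ℚ := ∏ k ∈ Finset.range r, ∏ j ∈ Finset.Ioo k r, (b k - b j) with hD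
  set D' : ℚ := ∏ k ∈ Finset.range r, ∏ j ∈ Finset.Ioo k r,
      (((bet l' r k : ℕ) : ℚ) - ((bet l' r j : ℕ) : ℚ)) with hD'
  have hHD : (hookProd (cellsOf l r) : ℚ) * D = F := hookProdQ l r hmono hsupp
  have hH'D' : (hookProd (cellsOf l' r) : ℚ) * D' = F' := hookProdQ l' r hmono' hsupp'
  -- nonzeroness
  have hbne : ∀ k, k < r → ∀ j, j < r → k ≠ j → b k ≠ b j := by
    intro k hk j hj hkj
    simp only [hb]
    rcases Nat.lt_or_ge k j with h | h
    · have := bet_anti l r hmono hsupp k j h hj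
      intro hcon
      rw [Nat.cast_inj] at hcon
      omega
    · have := bet_anti l r hmono hsupp j k (by omega) hk
      intro hcon
      rw [Nat.cast_inj] at hcon
      omega
  have hDne : D ≠ 0 := by
    rw [hD, Finset.prod_ne_zero_iff]
    intro k hk
    rw [Finset.prod_ne_zero_iff]
    intro j hj
    rw [Finset.mem_Ioo] at hj
    rw [Finset.mem_range] at hk
    exact sub_ne_zero_of_ne (hbne k hk j hj.2 (by omega))
  have hD'ne : D' ≠ 0 := by
    rw [hD', Finset.prod_ne_zero_iff]
    intro k hk
    rw [Finset.prod_ne_zero_iff]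
    intro j hj
    rw [Finset.mem_Ioo] at hj
    rw [Finset.mem_range] at hk
    have := bet_anti l' r hmono' hsupp' k j hj.1 hj.2
    intro hcon
    rw [sub_eq_zero, Nat.cast_inj] at hcon
    omega
  have hF'ne : F' ≠ 0 := by
    rw [hF', Finset.prod_ne_zero_iff]
    intro k _
    exact_mod_cast (bet l' r k).factorial_ne_zero
  -- F = bet i * F'
  have hFF' : F = b i * F' := by
    rw [hF, hF', ← Finset.mul_prod_erase _ _ (Finset.mem_range.mpr hir),
      ← Finset.mul_prod_erase _ (fun k => ((bet l' r k).factorial : ℚ)) (Finset.mem_range.mpr hir)]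
    have h1 : ∏ k ∈ (Finset.range r).erase i, ((bet l' r k).factorial : ℚ)
        = ∏ k ∈ (Finset.range r).erase i, ((bet l r k).factorial : ℚ) := by
      apply Finset.prod_congr rfl
      intro k hk
      rw [hbet'nat k, if_neg (Finset.ne_of_mem_erase hk)]
    rw [h1, hbet'nat i, if_pos (rfl : i = i)]
    have h2 : (bet l r i).factorial = bet l r i * (bet l r i - 1).factorial := by
      have : bet l r i = (bet l r i - 1) + 1 := by omega
      rw [this, Nat.factorial_succ]
      congr 1 <;> omega
    rw [h2]
    push_cast
    ring
  -- express D' via b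
  set c' : ℕ → ℚ := fun k => if k = i then b i - 1 else b k with hc'
  have hbet'Q : ∀ j, ((bet l' r j : ℕ) : ℚ) = c' j := by
    intro j
    rw [hbet'nat j]
    simp only [hc']
    split_ifs
    · rw [Nat.cast_sub hbeti]; simp [hb]
    · rfl
  have hD'c : D' = ∏ k ∈ Finset.range r, ∏ j ∈ Finset.Ioo k r, (c' k - c' j) := by
    rw [hD']
    apply Finset.prod_congr rfl
    intro k _
    apply Finset.prod_congr rfl
    intro j _
    rw [hbet'Q, hbet'Q]
  -- split both D and D'
  have hDsplit := prod_pairs_split r i hir b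
  have hD'split := prod_pairs_split r i hir c'
  set Rest : ℚ := ∏ k ∈ (Finset.range r).erase i, ∏ j ∈ (Finset.Ioo k r).erase i, (b k - b j)
    with hRest
  have hRest' : ∏ k ∈ (Finset.range r).erase i, ∏ j ∈ (Finset.Ioo k r).erase i, (c' k - c' j)
      = Rest := by
    rw [hRest]
    apply Finset.prod_congr rfl
    intro k hk
    apply Finset.prod_congr rfl
    intro j hj
    rw [hc']
    simp only
    rw [if_neg (Finset.ne_of_mem_erase hk), if_neg (Finset.ne_of_mem_erase hj)]
  have hP1' : ∏ k ∈ Finset.range i, (c' k - c' i) = ∏ k ∈ Finset.range i, (b k - (b i - 1)) := by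
    apply Finset.prod_congr rfl
    intro k hk
    rw [Finset.mem_range] at hk
    rw [hc']
    simp only
    rw [if_neg (show ¬ k = i by omega)]
    simp
  have hP2' : ∏ j ∈ Finset.Ioo i r, (c' i - c' j) = ∏ j ∈ Finset.Ioo i r, (b i - 1 - b j) := by
    apply Finset.prod_congr rfl
    intro j hj
    rw [Finset.mem_Ioo] at hj
    rw [hc']
    simp only
    rw [if_neg (show ¬ j = i by omega)]
    simp
  -- M and N
  set N : ℚ := ∏ j ∈ (Finset.range r).erase i, (b i - b j) with hN
  set M : ℚ := ∏ j ∈ (Finset.range r).erase i, (b i - 1 - b j) with hM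
  have hdisjRI : Disjoint (Finset.range i) (Finset.Ioo i r) := by
    rw [Finset.disjoint_left]
    intro k hk1 hk2
    rw [Finset.mem_range] at hk1
    rw [Finset.mem_Ioo] at hk2
    omega
  have hNsplit : N = (∏ k ∈ Finset.range i, (b i - b k)) * ∏ j ∈ Finset.Ioo i r, (b i - b j) := by
    rw [hN, erase_range_eq r i hir, Finset.prod_union hdisjRI]
  have hMsplit : M = (∏ k ∈ Finset.range i, (b i - 1 - b k))
      * ∏ j ∈ Finset.Ioo i r, (b i - 1 - b j) := by
    rw [hM, erase_range_eq r i hir, Finset.prod_union hdisjRI]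
  have hNne : N ≠ 0 := by
    rw [hN, Finset.prod_ne_zero_iff]
    intro j hj
    rw [Finset.mem_erase, Finset.mem_range] at hj
    exact sub_ne_zero_of_ne (hbne i hir j hj.2 (Ne.symm hj.1))
  -- the crucial product identity
  have hDN : D' * N = D * M := by
    rw [hD'c, hD'split, hRest', hP1', hP2', hD, hDsplit, hNsplit, hMsplit]
    have hkey : (∏ k ∈ Finset.range i, (b k - (b i - 1))) * ∏ k ∈ Finset.range i, (b i - b k)
        = (∏ k ∈ Finset.range i, (b k - b i)) * ∏ k ∈ Finset.range i, (b i - 1 - b k) := by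
      rw [← Finset.prod_mul_distrib, ← Finset.prod_mul_distrib]
      apply Finset.prod_congr rfl
      intro k _
      ring
    linear_combination ((∏ j ∈ Finset.Ioo i r, (b i - b j))
      * (∏ j ∈ Finset.Ioo i r, (b i - 1 - b j)) * Rest) * hkey
  -- conclude
  have hprodquot : (∏ j ∈ (Finset.range r).erase i,
      ((((bet l r i : ℕ) : ℚ) - 1 - ((bet l r j : ℕ) : ℚ))
        / (((bet l r i : ℕ) : ℚ) - ((bet l r j : ℕ) : ℚ)))) = M / N := by
    rw [hM, hN, ← Finset.prod_div_distrib]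
  have hFne : F ≠ 0 := by
    rw [hF, Finset.prod_ne_zero_iff]
    intro k _
    exact_mod_cast (bet l r k).factorial_ne_zero
  have hHne : (hookProd (cellsOf l r) : ℚ) ≠ 0 := by
    intro h0
    rw [h0, zero_mul] at hHD
    exact hFne hHD.symm
  have hH'ne : (hookProd (cellsOf l' r) : ℚ) ≠ 0 := by
    intro h0
    rw [h0, zero_mul] at hH'D'
    exact hF'ne hH'D'.symm
  rw [hprodquot, div_eq_div_iff hH'ne hHne, one_mul]
  have hHv : (hookProd (cellsOf l r) : ℚ) = F / D := by
    rw [eq_div_iff hDne]; exact hHD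
  have hH'v : (hookProd (cellsOf l' r) : ℚ) = F' / D' := by
    rw [eq_div_iff hD'ne]; exact hH'D'
  rw [hHv, hH'v]
  rw [div_eq_iff hDne]
  field_simp
  linear_combination (N * D') * hFF' + (b i * F') * hDN

end Glue

theorem card_div_hookProd_eq_sum_corners (Y : YoungDiagram) :
    (Y.cells.card : ℚ) / hookProd Y.cells =
    ∑ u ∈ Y.cells.filter fun u => (u.1 + 1, u.2) ∉ Y.cells ∧ (u.1, u.2 + 1) ∉ Y.cells,
      (1 : ℚ) / hookProd (Y.cells.erase u) := by
  classical
  set r := Y.colLen 0 with hr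
  set l : ℕ → ℕ := Y.rowLen with hl
  have hmono : ∀ i j, i ≤ j → l j ≤ l i := fun i j h => Y.rowLen_anti i j h
  have hposiff : ∀ i, 0 < l i ↔ i < r := by
    intro i
    rw [hl, hr]
    constructor
    · intro h
      exact YoungDiagram.mem_iff_lt_colLen.mp (YoungDiagram.mem_iff_lt_rowLen.mpr h)
    · intro h
      exact YoungDiagram.mem_iff_lt_rowLen.mp (YoungDiagram.mem_iff_lt_colLen.mpr h)
  have hsupp : ∀ i, r ≤ i → l i = 0 := by
    intro i hi
    have := hposiff i
    omega
  have hmem : ∀ u : ℕ × ℕ, u ∈ Y.cells ↔ u.2 < l u.1 := by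
    rintro ⟨a, c⟩
    rw [YoungDiagram.mem_cells, YoungDiagram.mem_iff_lt_rowLen]
  have hcells : Y.cells = cellsOf l r := by
    ext ⟨a, c⟩
    rw [mem_cellsOf, hmem (a, c)]
    constructor
    · intro h
      have := hposiff a
      exact ⟨by simp at h ⊢; omega, h⟩
    · exact fun h => h.2
  -- the corner rows
  set R : Finset ℕ := (Finset.range r).filter (fun i => l (i + 1) < l i) with hR
  have hcorner_set : (Y.cells.filter fun u => (u.1 + 1, u.2) ∉ Y.cells ∧ (u.1, u.2 + 1) ∉ Y.cells)
      = R.image (fun i => (i, l i - 1)) := by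
    ext ⟨a, c⟩
    rw [Finset.mem_filter, Finset.mem_image, hmem (a, c), hmem (a + 1, c), hmem (a, c + 1)]
    simp only [hR, Finset.mem_filter, Finset.mem_range, Prod.mk.injEq]
    constructor
    · rintro ⟨h1, h2, h3⟩
      have har : a < r := (hposiff a).mp (by omega)
      exact ⟨a, ⟨har, by omega⟩, rfl, by omega⟩
    · rintro ⟨i, ⟨hi1, hi2⟩, rfl, rfl⟩
      have hpos := (hposiff i).mpr hi1
      omega
  rw [hcorner_set]
  have hinj : ∀ x ∈ R, ∀ y ∈ R, (fun i => (i, l i - 1)) x = (fun i => (i, l i - 1)) y → x = y := by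
    intro x _ y _ h
    exact congrArg Prod.fst h
  rw [Finset.sum_image hinj, hcells]
  -- notation
  set b : ℕ → ℚ := fun k => ((bet l r k : ℕ) : ℚ) with hb
  -- per-corner term
  have hterm : ∀ i ∈ R, (1 : ℚ) / (hookProd ((cellsOf l r).erase (i, l i - 1)) : ℚ)
      = (b i * ∏ j ∈ (Finset.range r).erase i, ((b i - 1 - b j) / (b i - b j)))
        / (hookProd (cellsOf l r) : ℚ) := by
    intro i hi
    rw [hR, Finset.mem_filter, Finset.mem_range] at hi
    have hpos := (hposiff i).mpr hi.1
    rw [erase_corner_cells l r i hi.1 hpos]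
    exact ratio_lemma l r hmono hsupp i hi.1 hpos hi.2
  rw [Finset.sum_congr rfl hterm, ← Finset.sum_div]
  -- identify R with the validity filter
  have hbQ : ∀ i < r, ∀ j, i < j → j < r → b j < b i := by
    intro i hi j hij hjr
    have := bet_anti l r hmono hsupp i j hij hjr
    simp only [hb]
    exact_mod_cast this
  have hcast1 : ∀ k m : ℕ, ((k : ℚ) = (m : ℚ) - 1) ↔ k + 1 = m := by
    intro k m
    rw [eq_sub_iff_add_eq]
    constructor
    · intro h
      exact_mod_cast h
    · intro h
      exact_mod_cast congrArg (Nat.cast : ℕ → ℚ) h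
  have hRV : R = (Finset.range r).filter (fun i => ∀ j < r, b j ≠ b i - 1) := by
    rw [hR]
    apply Finset.filter_congr
    intro i hi
    rw [Finset.mem_range] at hi
    have hpos := (hposiff i).mpr hi
    constructor
    · intro hc j hj
      simp only [hb]
      rw [ne_eq, hcast1]
      intro hcon
      -- bet j + 1 = bet i
      rcases Nat.lt_trichotomy j i with h | h | h
      · have := bet_anti l r hmono hsupp j i h hi
        omega
      · subst h
        omega
      · -- i < j < r
        have h1 : bet l r (i + 1) + 1 < bet l r i := by
          unfold bet
          omega
        rcases Nat.eq_or_lt_of_le (show i + 1 ≤ j by omega) with h2 | h2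
        · rw [← h2] at hcon
          omega
        · have := bet_anti l r hmono hsupp (i + 1) j h2 hj
          omega
    · intro hv
      by_cases hi1 : i + 1 < r
      · have := hv (i + 1) hi1
        simp only [hb] at this
        rw [ne_eq, hcast1] at this
        unfold bet at this
        have := hmono i (i + 1) (by omega)
        omega
      · have := hsupp (i + 1) (by omega)
        omega
  rw [hRV]
  have hsumT := sumT r b hbQ
  rw [hsumT]
  -- the cardinality
  have hcard : (cellsOf l r).card = ∑ i ∈ Finset.range r, l i := by
    unfold cellsOf
    rw [Finset.card_biUnion]
    · apply Finset.sum_congr rfl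
      intro i _
      rw [Finset.card_image_of_injective _ (fun x y h => by simpa using h), Finset.card_range]
    · intro a _ c _ hac
      rw [Function.onFun, Finset.disjoint_left]
      rintro ⟨u, v⟩ hu hv
      simp only [Finset.mem_image, Finset.mem_range, Prod.mk.injEq] at hu hv
      obtain ⟨x, _, rfl, _⟩ := hu
      obtain ⟨y, _, h2, _⟩ := hv
      exact hac (h2 ▸ rfl)
  have hgauss : ((∑ i ∈ Finset.range r, (r - 1 - i) : ℕ) : ℚ) = (r : ℚ) * ((r : ℚ) - 1) / 2 := by
    have h1 : ∑ i ∈ Finset.range r, (r - 1 - i) = ∑ i ∈ Finset.range r, i :=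
      Finset.sum_range_reflect (fun j => j) r
    rcases Nat.eq_zero_or_pos r with h0 | hrpos
    · rw [h0]; simp
    · rw [h1]
      have h2 := Finset.sum_range_id_mul_two r
      have h3 : ((∑ i ∈ Finset.range r, i : ℕ) : ℚ) * 2 = (r : ℚ) * ((r : ℚ) - 1) := by
        have := congrArg (Nat.cast : ℕ → ℚ) h2
        push_cast [Nat.cast_sub hrpos] at this
        convert this using 2
        push_cast
        ring
      linarith
  have hnum : ((cellsOf l r).card : ℚ) = (∑ i ∈ Finset.range r, b i) - (r : ℚ) * ((r : ℚ) - 1) / 2 := by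
    rw [hcard]
    have : ∑ i ∈ Finset.range r, b i
        = (∑ i ∈ Finset.range r, (l i : ℚ)) + ((∑ i ∈ Finset.range r, (r - 1 - i) : ℕ) : ℚ) := by
      push_cast
      rw [← Finset.sum_add_distrib]
      apply Finset.sum_congr rfl
      intro i _
      simp only [hb]
      unfold bet
      push_cast
      ring
    rw [this, hgauss]
    push_cast
    ring
  rw [hnum]
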